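/- For integers 1 ≤ n ≤ N, define A_n^N = Σ_{k=0}^{N-n} (-1)^k · C(n+k, n). Then 2·A_n^N − A_{n-1}^N = (−1)^{N−n} · C(N+1, n). -/

import Mathlib

/-- `A n N = ∑_{k=0}^{N-n} (-1)^k * C(n+k, n)` as an integer. -/
def altBinomSum (n N : ℕ) : ℤ :=
  ∑ k ∈ Finset.range (N - n + 1), (-1 : ℤ) ^ k * ((n + k).choose n : ℤ)

lemma altBinomSum_step (n N : ℕ) (h : n ≤ N) :
    altBinomSum n (N + 1) =
      altBinomSum n N + (-1 : ℤ) ^ (N + 1 - n) * ((N + 1).choose n : ℤ) := by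
  unfold altBinomSum
  have h1 : N + 1 - n + 1 = (N - n + 1) + 1 := by omega
  rw [h1, Finset.sum_range_succ]
  have h2 : n + (N - n + 1) = N + 1 := by omega
  have h3 : N - n + 1 = N + 1 - n := by omega
  rw [h2, h3]

theorem stmt1 (n N : ℕ) (hn : 1 ≤ n) (hnN : n ≤ N) :
    2 * altBinomSum n N - altBinomSum (n - 1) N =
      (-1 : ℤ) ^ (N - n) * ((N + 1).choose n : ℤ) := by
  obtain ⟨m, rfl⟩ : ∃ m, n = m + 1 := ⟨n - 1, by omega⟩
  induction N, hnN using Nat.le_induction with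
  | base =>
    unfold altBinomSum
    have e1 : m + 1 - (m + 1) + 1 = 1 := by omega
    have e2 : m + 1 - (m + 1 - 1) + 1 = 2 := by omega
    have e3 : m + 1 - 1 = m := by omega
    rw [e1, e2, e3]
    simp [Finset.sum_range_succ, Nat.choose_succ_self_right]
    ring
  | succ N hN ih =>
    rw [altBinomSum_step (m + 1) N hN,
        altBinomSum_step (m + 1 - 1) N (by omega)]
    have e3 : m + 1 - 1 = m := by omega
    have e4 : N + 1 - (m + 1) = N - (m + 1) + 1 := by omega
    have e5 : N + 1 - m = N - (m + 1) + 2 := by omega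
    have e6 : N + 1 - (m + 1) = N - m := by omega
    have pascal : ((N + 2).choose (m + 1) : ℤ) =
        ((N + 1).choose m : ℤ) + ((N + 1).choose (m + 1) : ℤ) := by
      have := Nat.succ_sub_one
      push_cast [show N + 2 = (N + 1) + 1 from rfl, Nat.choose_succ_succ]
      ring
    rw [e3] at ih ⊢
    rw [e4, e5]
    ring_nf
    ring_nf at ih
    have p2 : ((2 + N).choose (1 + m) : ℤ) =
        ((1 + N).choose m : ℤ) + ((1 + N).choose (1 + m) : ℤ) := by
      rw [show 2 + N = N + 2 by ring, show 1 + m = m + 1 by ring,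
          show 1 + N = N + 1 by ring]
      exact pascal
    linear_combination ih + (-1 : ℤ) ^ (N - (1 + m)) * p2
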